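/- arXiv:1607.08369 — 5 statements merged into one kernel-verified Lean document; each statement's English description precedes it below -/
import Mathlib

section
/- For every classical propositional formula α, Prob(α) = Σ_{v : B_α → {0,1}, v ⊨ α} Σ_{i ∈ U_v} |⟨u_i, ψ⟩|², where the inner sum is a convergent sum (tsum) of nonnegative reals over U_v. -/
open scoped InnerProductSpace

noncomputable section

/-- Classical propositional formulas, built from propositional symbols `B_j` (`j : ℕ`)
and `⊤` using `¬` and `→`. -/
inductive PropForm : Type
  | verum : PropForm
  | var : ℕ → PropForm
  | neg : PropForm → PropForm
  | imp : PropForm → PropForm → PropForm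

namespace PropForm

/-- The (finite) set of propositional symbols occurring in a formula. -/
def symbols : PropForm → Finset ℕ
  | verum => ∅
  | var n => {n}
  | neg a => a.symbols
  | imp a b => a.symbols ∪ b.symbols

/-- Truth-table evaluation of a formula under a (total) assignment of truth values. -/
def eval (w : ℕ → Bool) : PropForm → Bool
  | verum => true
  | var n => w n
  | neg a => !(a.eval w)
  | imp a b => !(a.eval w) || b.eval w

end PropForm

/-- A valuation `v` on a set `A` of propositional symbols (with `A ⊇ B_α`) satisfies `α`. -/
def Sat (A : Finset ℕ) (v : {n // n ∈ A} → Bool) (α : PropForm) : Prop :=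
  PropForm.eval (fun n => if h : n ∈ A then v ⟨n, h⟩ else false) α = true

instance (A : Finset ℕ) (α : PropForm) : DecidablePred (fun v => Sat A v α) := fun _ => by
  unfold Sat; infer_instance

variable {ι H : Type*} [NormedAddCommGroup H] [InnerProductSpace ℂ H] [CompleteSpace H]

/-- `Hs u S` is the topological closure of the linear span of `{u i : i ∈ S}`. -/
def Hs (u : HilbertBasis ι ℂ H) (S : Set ι) : Submodule ℂ H :=
  (Submodule.span ℂ ((fun i => u i) '' S)).topologicalClosure

instance (u : HilbertBasis ι ℂ H) (S : Set ι) : Submodule.HasOrthogonalProjection (Hs u S) :=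
  haveI : CompleteSpace (Hs u S) :=
    IsClosed.completeSpace_coe (hs := Submodule.isClosed_topologicalClosure _)
  Submodule.HasOrthogonalProjection.ofCompleteSpace _

/-- The orthogonal projection of `H` onto `Hs u S`, as an operator on `H`. -/
def P (u : HilbertBasis ι ℂ H) (S : Set ι) : H →L[ℂ] H :=
  (Hs u S).subtypeL.comp (Submodule.orthogonalProjectionOnto (Hs u S))

/-- `Pj u lam j S` is the orthogonal projection onto the closure of the span of
`{u i : lam j i ∈ S}`. -/
def Pj (u : HilbertBasis ι ℂ H) (lam : ℕ → ι → ℝ) (j : ℕ) (S : Set ℝ) : H →L[ℂ] H :=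
  P u {i | lam j i ∈ S}

/-- `Prob u lam up ψ α` is the probability assigned to the classical formula `α`:
the sum, over the valuations `v` on `B_α` satisfying `α`, of
`Re ⟪ψ, P_{j_k}(D_{j_k}^v)(⋯ (P_{j_1}(D_{j_1}^v) ψ) ⋯)⟫` where `B_α = {j_1 < … < j_k}`
and `D_j^v` is `up j` if `v (B_j) = 1` and its complement otherwise. -/
def Prob (u : HilbertBasis ι ℂ H) (lam : ℕ → ι → ℝ) (up : ℕ → Set ℝ) (ψ : H)
    (α : PropForm) : ℝ :=
  ∑ v ∈ Finset.univ.filter (fun v : {n // n ∈ α.symbols} → Bool => Sat α.symbols v α),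
    (⟪ψ, (α.symbols.sort (· ≤ ·)).foldl
        (fun x j => if h : j ∈ α.symbols then
            Pj u lam j (if v ⟨j, h⟩ then up j else (up j)ᶜ) x
          else x) ψ⟫_ℂ).re

/-- `UvSet u lam up A v` is the set `U_v` of basis indices `i` such that `λ_j(i) ∈ D_j^v`
for every symbol `j` in the domain `A` of the valuation `v`. -/
def UvSet (u : HilbertBasis ι ℂ H) (lam : ℕ → ι → ℝ) (up : ℕ → Set ℝ) (A : Finset ℕ)
    (v : {n // n ∈ A} → Bool) : Set ι :=
  {i | ∀ j : {n // n ∈ A}, lam j i ∈ (if v j then up (j : ℕ) else (up (j : ℕ))ᶜ)}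

open scoped Classical in
lemma coeff_P (u : HilbertBasis ι ℂ H) (S : Set ι) (x : H) (i : ι) :
    ⟪u i, P u S x⟫_ℂ = if i ∈ S then ⟪u i, x⟫_ℂ else 0 := by
  by_cases hi : i ∈ S
  · simp only [hi, if_true]
    have hmem : (u i : H) ∈ Hs u S :=
      Submodule.le_topologicalClosure _ (Submodule.subset_span ⟨i, hi, rfl⟩)
    have h : x - P u S x ∈ (Hs u S)ᗮ := Submodule.sub_starProjection_mem_orthogonal (K := Hs u S) x
    have h2 := Submodule.inner_right_of_mem_orthogonal hmem h
    rw [inner_sub_right, sub_eq_zero] at h2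
    simpa [P] using h2.symm
  · simp only [hi, if_false]
    have hKo : (u i : H) ∈ (Submodule.span ℂ ((fun i => u i) '' S))ᗮ := by
      rw [Submodule.mem_orthogonal]
      intro w hw
      induction hw using Submodule.span_induction with
      | mem w hw =>
          obtain ⟨j, hj, rfl⟩ := hw
          exact u.orthonormal.2 (fun hji => hi (hji ▸ hj))
      | zero => simp
      | add a b _ _ ha hb => rw [inner_add_left, ha, hb, add_zero]
      | smul c a _ ha => rw [inner_smul_left, ha, mul_zero]
    have hPmem : P u S x ∈ (Submodule.span ℂ ((fun i => u i) '' S))ᗮᗮ := by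
      rw [Submodule.orthogonal_orthogonal_eq_closure]
      exact SetLike.coe_mem _
    exact Submodule.inner_right_of_mem_orthogonal hKo hPmem

open scoped Classical in
lemma coeff_foldl (u : HilbertBasis ι ℂ H) (lam : ℕ → ι → ℝ) (Sf : ℕ → Set ℝ)
    (l : List ℕ) (x : H) (i : ι) :
    ⟪u i, l.foldl (fun x j => Pj u lam j (Sf j) x) x⟫_ℂ
      = if ∀ j ∈ l, lam j i ∈ Sf j then ⟪u i, x⟫_ℂ else 0 := by
  induction l using List.reverseRecOn with
  | nil => simp
  | append_singleton l j ih =>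
      rw [List.foldl_append, List.foldl_cons, List.foldl_nil, Pj, coeff_P, ih]
      by_cases h1 : lam j i ∈ Sf j <;> by_cases h2 : ∀ k ∈ l, lam k i ∈ Sf k <;>
        simp [h1, h2, List.forall_mem_append, or_imp, forall_and, forall_eq]

/-- `Prob(α) = Σ_{v : B_α → {0,1}, v ⊨ α} Σ_{i ∈ U_v} |⟨u i, ψ⟩|²`, the inner sums being
convergent sums of nonnegative reals. -/
theorem stmt4 (u : HilbertBasis ι ℂ H) (ψ : H) (hψ : ‖ψ‖ = 1)
    (O : ℕ → H →L[ℂ] H) (lam : ℕ → ι → ℝ)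
    (heig : ∀ j i, O j (u i) = (lam j i : ℂ) • u i) (up : ℕ → Set ℝ) (α : PropForm) :
    (∀ v : {n // n ∈ α.symbols} → Bool,
        Summable (fun i : UvSet u lam up α.symbols v => ‖⟪u (i : ι), ψ⟫_ℂ‖ ^ 2)) ∧
    Prob u lam up ψ α =
      ∑ v ∈ Finset.univ.filter (fun v : {n // n ∈ α.symbols} → Bool => Sat α.symbols v α),
        ∑' i : UvSet u lam up α.symbols v, ‖⟪u (i : ι), ψ⟫_ℂ‖ ^ 2 := by
  have hsummable : ∀ v : {n // n ∈ α.symbols} → Bool,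
      Summable (fun i : UvSet u lam up α.symbols v => ‖⟪u (i : ι), ψ⟫_ℂ‖ ^ 2) :=
    fun v => (u.orthonormal.inner_products_summable (x := ψ)).subtype _
  refine ⟨hsummable, ?_⟩
  rw [Prob]
  refine Finset.sum_congr rfl ?_
  intro v _
  classical
  have hfold : (α.symbols.sort (· ≤ ·)).foldl
      (fun x j => if h : j ∈ α.symbols then
          Pj u lam j (if v ⟨j, h⟩ then up j else (up j)ᶜ) x else x) ψ
      = (α.symbols.sort (· ≤ ·)).foldl (fun x j => Pj u lam j
          (if h : j ∈ α.symbols then (if v ⟨j, h⟩ then up j else (up j)ᶜ) else ∅) x) ψ := by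
    refine List.foldl_ext _ _ ψ fun x j hj => ?_
    have hjA : j ∈ α.symbols := (Finset.mem_sort _).mp hj
    simp [hjA]
  have hU : ∀ i : ι, i ∈ UvSet u lam up α.symbols v ↔ ∀ j ∈ α.symbols.sort (· ≤ ·),
      lam j i ∈ (if h : j ∈ α.symbols then (if v ⟨j, h⟩ then up j else (up j)ᶜ) else ∅) := by
    intro i
    constructor
    · intro h j hj
      have hjA : j ∈ α.symbols := (Finset.mem_sort _).mp hj
      simpa [hjA] using h ⟨j, hjA⟩
    · intro h j
      have hjl : (j : ℕ) ∈ α.symbols.sort (· ≤ ·) := (Finset.mem_sort _).mpr j.2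
      simpa [j.2] using h j hjl
  set T := (α.symbols.sort (· ≤ ·)).foldl (fun x j => Pj u lam j
      (if h : j ∈ α.symbols then (if v ⟨j, h⟩ then up j else (up j)ᶜ) else ∅) x) ψ with hT
  rw [hfold, ← u.tsum_inner_mul_inner ψ T,
    Complex.re_tsum (u.summable_inner_mul_inner ψ T),
    tsum_subtype (UvSet u lam up α.symbols v) (fun i => ‖⟪u i, ψ⟫_ℂ‖ ^ 2)]
  refine tsum_congr fun i => ?_
  rw [hT, coeff_foldl, Set.indicator_apply]
  by_cases hi : i ∈ UvSet u lam up α.symbols v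
  · rw [if_pos ((hU i).mp hi), if_pos hi, ← inner_conj_symm ψ (u i), RCLike.conj_mul]
    norm_cast
  · rw [if_neg (fun h => hi ((hU i).mpr h)), if_neg hi, mul_zero, Complex.zero_re]

end
end

section
/- For every classical propositional formula α, 0 ≤ Prob(α) ≤ 1. -/
open scoped InnerProductSpace

noncomputable section

variable {ι H : Type*} [NormedAddCommGroup H] [InnerProductSpace ℂ H] [CompleteSpace H]

section MyAux

variable {ι H : Type*} [NormedAddCommGroup H] [InnerProductSpace ℂ H] [CompleteSpace H]

lemma myP_mem (u : HilbertBasis ι ℂ H) (S : Set ι) (x : H) : P u S x ∈ Hs u S := by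
  simp only [P, ContinuousLinearMap.comp_apply]
  exact (Submodule.orthogonalProjectionOnto (Hs u S) x).2

lemma myHs_orth (u : HilbertBasis ι ℂ H) {S T : Set ι} (h : ∀ i ∈ S, i ∉ T) :
    Hs u S ⟂ Hs u T := by
  have h1 : Submodule.span ℂ ((fun i => u i) '' S) ⟂ Submodule.span ℂ ((fun i => u i) '' T) := by
    refine Submodule.isOrtho_span.mpr ?_
    rintro _ ⟨i, hi, rfl⟩ _ ⟨j, hj, rfl⟩
    exact u.orthonormal.2 (fun hij => h i hi (hij ▸ hj))
  unfold Hs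
  refine Submodule.isOrtho_iff_le.mpr (Submodule.topologicalClosure_minimal _ ?_
    (Submodule.isClosed_orthogonal _))
  refine Submodule.isOrtho_iff_le.mp (Submodule.IsOrtho.symm ?_)
  refine Submodule.isOrtho_iff_le.mpr (Submodule.topologicalClosure_minimal _ ?_
    (Submodule.isClosed_orthogonal _))
  exact Submodule.isOrtho_iff_le.mp h1.symm

open Classical in
lemma myP_basis (u : HilbertBasis ι ℂ H) (S : Set ι) (i : ι) :
    P u S (u i) = if i ∈ S then u i else 0 := by
  split_ifs with h
  · have hm : (u i : H) ∈ Hs u S :=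
      Submodule.le_topologicalClosure _ (Submodule.subset_span ⟨i, h, rfl⟩)
    simpa [P] using Submodule.starProjection_eq_self_iff.mpr hm
  · have hm : (u i : H) ∈ (Hs u S)ᗮ := by
      have := myHs_orth u (S := {i}) (T := S) (by simpa using h)
      exact Submodule.isOrtho_iff_le.mp this
        (Submodule.le_topologicalClosure _ (Submodule.subset_span ⟨i, rfl, rfl⟩))
    simpa [P] using
      congrArg (Subtype.val)
        (Submodule.orthogonalProjectionOnto_apply_of_mem_orthogonal hm)

lemma myDense (u : HilbertBasis ι ℂ H) :
    Dense ((Submodule.span ℂ (Set.range fun i => u i) : Submodule ℂ H) : Set H) := by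
  exact Submodule.dense_iff_topologicalClosure_eq_top.mpr u.dense_span

lemma myP_comp (u : HilbertBasis ι ℂ H) (S T : Set ι) (x : H) :
    P u S (P u T x) = P u (T ∩ S) x := by
  have : (P u S).comp (P u T) = P u (T ∩ S) := by
    refine ContinuousLinearMap.ext_on (myDense u) ?_
    rintro _ ⟨i, rfl⟩
    simp only [ContinuousLinearMap.comp_apply, myP_basis]
    by_cases hT : i ∈ T <;> by_cases hS : i ∈ S <;>
      simp [hT, hS, myP_basis, Set.mem_inter_iff]
  exact DFunLike.congr_fun this x

lemma myRe_inner (u : HilbertBasis ι ℂ H) (S : Set ι) (ψ : H) :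
    (⟪ψ, P u S ψ⟫_ℂ).re = ‖P u S ψ‖ ^ 2 := by
  have h0 : ⟪ψ - P u S ψ, P u S ψ⟫_ℂ = 0 := by
    refine Submodule.inner_left_of_mem_orthogonal (myP_mem u S ψ) ?_
    simpa [P] using Submodule.sub_starProjection_mem_orthogonal (K := Hs u S) ψ
  have : ⟪ψ, P u S ψ⟫_ℂ = ⟪P u S ψ, P u S ψ⟫_ℂ := by
    have := inner_sub_left (𝕜 := ℂ) ψ (P u S ψ) (P u S ψ)
    rw [h0] at this
    linear_combination -this
  rw [this]
  exact inner_self_eq_norm_sq (𝕜 := ℂ) _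

lemma myFoldl_P (u : HilbertBasis ι ℂ H) (S : ℕ → Set ι) :
    ∀ (l : List ℕ) (S0 : Set ι) (x : H),
      l.foldl (fun y j => P u (S j) y) (P u S0 x)
        = P u (S0 ∩ {i | ∀ j ∈ l, i ∈ S j}) x := by
  intro l
  induction l with
  | nil => intro S0 x; simp
  | cons j l ih =>
      intro S0 x
      rw [List.foldl_cons, myP_comp, ih]
      have hset : (S0 ∩ S j) ∩ {i | ∀ k ∈ l, i ∈ S k}
          = S0 ∩ {i | ∀ k ∈ j :: l, i ∈ S k} := by
        ext i
        simp only [Set.mem_inter_iff, Set.mem_setOf_eq, List.mem_cons]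
        constructor
        · rintro ⟨⟨h0, hj⟩, hl⟩
          exact ⟨h0, fun k hk => hk.elim (fun e => e ▸ hj) (hl k)⟩
        · rintro ⟨h0, hall⟩
          exact ⟨⟨h0, hall j (Or.inl rfl)⟩, fun k hk => hall k (Or.inr hk)⟩
      rw [hset]

lemma myFoldl_P' (u : HilbertBasis ι ℂ H) (S : ℕ → Set ι) (l : List ℕ) (hl : l ≠ []) (x : H) :
    l.foldl (fun y j => P u (S j) y) x = P u {i | ∀ j ∈ l, i ∈ S j} x := by
  cases l with
  | nil => exact absurd rfl hl
  | cons j l =>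
      rw [List.foldl_cons, myFoldl_P]
      have hset : S j ∩ {i | ∀ k ∈ l, i ∈ S k} = {i | ∀ k ∈ j :: l, i ∈ S k} := by
        ext i
        simp only [Set.mem_inter_iff, Set.mem_setOf_eq, List.mem_cons]
        constructor
        · rintro ⟨hj, hl⟩
          exact fun k hk => hk.elim (fun e => e ▸ hj) (hl k)
        · intro hall
          exact ⟨hall j (Or.inl rfl), fun k hk => hall k (Or.inr hk)⟩
      rw [hset]

lemma myFoldl_congr {f g : H → ℕ → H} (l : List ℕ) (h : ∀ j ∈ l, ∀ y, f y j = g y j) :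
    ∀ x, l.foldl f x = l.foldl g x := by
  induction l with
  | nil => intro x; rfl
  | cons j l ih =>
      intro x
      rw [List.foldl_cons, List.foldl_cons, h j (by simp)]
      exact ih (fun j hj y => h j (by simp [hj]) y) _

lemma myP_sum {V : Type*} [Fintype V] (u : HilbertBasis ι ℂ H) (T : V → Set ι)
    (hT : ∀ i, ∃! v, i ∈ T v) (x : H) :
    ∑ v, P u (T v) x = x := by
  have : ∑ v, P u (T v) = ContinuousLinearMap.id ℂ H := by
    refine ContinuousLinearMap.ext_on (myDense u) ?_
    rintro _ ⟨i, rfl⟩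
    obtain ⟨v₀, hv₀, huniq⟩ := hT i
    simp only [ContinuousLinearMap.sum_apply, ContinuousLinearMap.id_apply, myP_basis]
    rw [Fintype.sum_eq_single v₀ (fun v hv =>
      if_neg (fun h : i ∈ T v => hv (huniq v h)))]
    rw [if_pos hv₀]
  calc ∑ v, P u (T v) x = (∑ v, P u (T v)) x := by simp
    _ = x := by rw [this]; rfl

lemma myPythagoras {V : Type*} [Fintype V] (u : HilbertBasis ι ℂ H) (T : V → Set ι)
    (hT : ∀ i, ∃! v, i ∈ T v) (ψ : H) :
    ∑ v, ‖P u (T v) ψ‖ ^ 2 = ‖ψ‖ ^ 2 := by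
  classical
  have hdisj : ∀ v w : V, v ≠ w → ⟪P u (T v) ψ, P u (T w) ψ⟫_ℂ = 0 := by
    intro v w hvw
    have horth : Hs u (T v) ⟂ Hs u (T w) := by
      refine myHs_orth u (fun i hi hiw => hvw ?_)
      obtain ⟨v₀, _, huniq⟩ := hT i
      rw [huniq v hi, huniq w hiw]
    exact horth.inner_eq (myP_mem u _ ψ) (myP_mem u _ ψ)
  have hker : (⟪ψ, ψ⟫_ℂ).re = ∑ v, ‖P u (T v) ψ‖ ^ 2 := by
    conv_lhs => rw [← myP_sum u T hT ψ]
    rw [inner_sum, Complex.re_sum]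
    refine Finset.sum_congr rfl (fun v _ => ?_)
    rw [sum_inner, Complex.re_sum]
    rw [Finset.sum_eq_single v (fun w _ hwv => by rw [hdisj w v hwv]; simp)
      (fun h => absurd (Finset.mem_univ v) h)]
    exact inner_self_eq_norm_sq (𝕜 := ℂ) _
  rw [← hker]
  exact inner_self_eq_norm_sq (𝕜 := ℂ) _

end MyAux

/-- For every classical propositional formula `α`, `0 ≤ Prob(α) ≤ 1`. -/
theorem stmt5 (u : HilbertBasis ι ℂ H) (ψ : H) (hψ : ‖ψ‖ = 1)
    (O : ℕ → H →L[ℂ] H) (lam : ℕ → ι → ℝ)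
    (heig : ∀ j i, O j (u i) = (lam j i : ℂ) • u i) (up : ℕ → Set ℝ) (α : PropForm) :
    0 ≤ Prob u lam up ψ α ∧ Prob u lam up ψ α ≤ 1 := by
  classical
  unfold Prob
  set A := α.symbols with hA
  set L := A.sort (· ≤ ·) with hL
  by_cases hLe : L = []
  · have hAe : A = ∅ := by
      refine Finset.eq_empty_iff_forall_notMem.mpr (fun n hn => ?_)
      have h1 : n ∈ L := (Finset.mem_sort _).mpr hn
      rw [hLe] at h1
      exact absurd h1 List.not_mem_nil
    rw [hLe]
    simp only [List.foldl_nil]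
    have h1 : (⟪ψ, ψ⟫_ℂ).re = 1 := by
      have h2 := inner_self_eq_norm_sq (𝕜 := ℂ) ψ
      rw [RCLike.re_to_complex] at h2
      rw [h2, hψ]; norm_num
    rw [Finset.sum_congr rfl (fun v _ => h1), Finset.sum_const, nsmul_eq_mul, mul_one]
    have hcard : (Finset.univ.filter
        (fun v : {n // n ∈ A} → Bool => Sat A v α)).card ≤ 1 := by
      have h3 : Fintype.card ({n // n ∈ A} → Bool) = 1 := by
        have : Fintype.card {n // n ∈ A} = 0 := by simp [hAe]
        rw [Fintype.card_fun, this, pow_zero]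
      calc (Finset.univ.filter (fun v : {n // n ∈ A} → Bool => Sat A v α)).card
          ≤ Finset.univ.card := Finset.card_filter_le _ _
        _ = 1 := by rw [Finset.card_univ, h3]
    constructor
    · positivity
    · exact_mod_cast hcard
  · set W := ({n // n ∈ A} → Bool) with hW
    set Sv : W → ℕ → Set ι := fun v j => {i | lam j i ∈
        (if (if h : j ∈ A then v ⟨j, h⟩ else false) then up j else (up j)ᶜ)} with hSv
    set T : W → Set ι := fun v => {i | ∀ j ∈ L, i ∈ Sv v j} with hT
    have hterm : ∀ v : W,
        L.foldl (fun x j => if h : j ∈ A then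
            Pj u lam j (if v ⟨j, h⟩ then up j else (up j)ᶜ) x else x) ψ
          = P u (T v) ψ := by
      intro v
      rw [myFoldl_congr (g := fun x j => P u (Sv v j) x) L ?_ ψ]
      · exact myFoldl_P' u (Sv v) L hLe ψ
      · intro j hj y
        have hjA : j ∈ A := (Finset.mem_sort _).mp hj
        rw [dif_pos hjA]
        show Pj u lam j _ y = P u (Sv v j) y
        simp only [hSv, dif_pos hjA]
        rfl
    have hpart : ∀ i, ∃! v : W, i ∈ T v := by
      intro i
      refine ⟨fun n => decide (lam n.1 i ∈ up n.1), ?_, ?_⟩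
      · intro j hj
        have hjA : j ∈ A := (Finset.mem_sort _).mp hj
        simp only [hSv, Set.mem_setOf_eq, dif_pos hjA]
        by_cases hP : lam j i ∈ up j
        · simp [hP]
        · simp [hP]
      · intro v hv
        funext n
        obtain ⟨j, hjA⟩ := n
        have hjL : j ∈ L := (Finset.mem_sort _).mpr hjA
        have h2 := hv j hjL
        simp only [hSv, Set.mem_setOf_eq, dif_pos hjA] at h2
        cases hb : v ⟨j, hjA⟩ with
        | false =>
            rw [hb] at h2
            simp at h2
            simp [h2]
        | true =>
            rw [hb] at h2
            simp at h2
            simp [h2]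
    have hsum : (∑ v ∈ Finset.univ.filter (fun v : W => Sat A v α),
          (⟪ψ, L.foldl (fun x j => if h : j ∈ A then
            Pj u lam j (if v ⟨j, h⟩ then up j else (up j)ᶜ) x else x) ψ⟫_ℂ).re)
        = ∑ v ∈ Finset.univ.filter (fun v : W => Sat A v α), ‖P u (T v) ψ‖ ^ 2 :=
      Finset.sum_congr rfl (fun v _ => by rw [hterm v, myRe_inner])
    rw [hsum]
    constructor
    · exact Finset.sum_nonneg (fun v _ => sq_nonneg _)
    · calc ∑ v ∈ Finset.univ.filter (fun v : W => Sat A v α), ‖P u (T v) ψ‖ ^ 2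
          ≤ ∑ v : W, ‖P u (T v) ψ‖ ^ 2 :=
            Finset.sum_le_sum_of_subset_of_nonneg (Finset.filter_subset _ _)
              (fun v _ _ => sq_nonneg _)
        _ = ‖ψ‖ ^ 2 := myPythagoras u T hpart ψ
        _ = 1 := by rw [hψ]; norm_num

end
end

section
/- Let α and β be classical propositional formulas such that no valuation on B_α ∪ B_β satisfies both α and β (i.e. ¬(β ∧ α) is a tautology). Then Prob(β ∨ α) = Prob(β) + Prob(α), where β ∨ α abbreviates (¬β) → α. -/
open scoped InnerProductSpace

noncomputable section

variable {ι H : Type*} [NormedAddCommGroup H] [InnerProductSpace ℂ H] [CompleteSpace H]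

set_option maxHeartbeats 1600000

namespace Stmt8Aux

lemma eval_congr {w w' : ℕ → Bool} (α : PropForm) (h : ∀ n ∈ α.symbols, w n = w' n) :
    PropForm.eval w α = PropForm.eval w' α := by
  induction α with
  | verum => rfl
  | var n => exact h n (by simp [PropForm.symbols])
  | neg a iha =>
    simp only [PropForm.eval]
    rw [iha (fun n hn => h n (by simpa [PropForm.symbols] using hn))]
  | imp a b iha ihb =>
    simp only [PropForm.eval]
    rw [iha (fun n hn => h n (by simp [PropForm.symbols, hn])),
      ihb (fun n hn => h n (by simp [PropForm.symbols, hn]))]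

lemma foldl_congr {M : Type*} {f g : M → ℕ → M} (l : List ℕ)
    (h : ∀ j ∈ l, ∀ y, f y j = g y j) (x : M) : l.foldl f x = l.foldl g x := by
  induction l generalizing x with
  | nil => rfl
  | cons j l ih =>
    rw [List.foldl_cons, List.foldl_cons, h j (List.mem_cons_self),
      ih (fun i hi => h i (List.mem_cons_of_mem _ hi))]

lemma foldl_add {M : Type*} [AddCommMonoid M] {f : M → ℕ → M}
    (hadd : ∀ i y z, f (y + z) i = f y i + f z i) (l : List ℕ) (y z : M) :
    l.foldl f (y + z) = l.foldl f y + l.foldl f z := by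
  induction l generalizing y z with
  | nil => rfl
  | cons i l ih => rw [List.foldl_cons, List.foldl_cons, List.foldl_cons, hadd, ih]

lemma foldl_split_sum {M : Type*} [AddCommMonoid M] (f ft ff : M → ℕ → M) (j : ℕ)
    (l₁ l₂ : List ℕ)
    (hft : ∀ i ∈ l₁ ++ l₂, ∀ y, ft y i = f y i)
    (hff : ∀ i ∈ l₁ ++ l₂, ∀ y, ff y i = f y i)
    (hj : ∀ y : M, ft y j + ff y j = y)
    (hadd : ∀ i y z, f (y + z) i = f y i + f z i)
    (x : M) :
    (l₁ ++ j :: l₂).foldl ft x + (l₁ ++ j :: l₂).foldl ff x = (l₁ ++ l₂).foldl f x := by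
  have e1 : ∀ i ∈ l₁, ∀ y, ft y i = f y i :=
    fun i hi => hft i (List.mem_append_left _ hi)
  have e2 : ∀ i ∈ l₂, ∀ y, ft y i = f y i :=
    fun i hi => hft i (List.mem_append_right _ hi)
  have e3 : ∀ i ∈ l₁, ∀ y, ff y i = f y i :=
    fun i hi => hff i (List.mem_append_left _ hi)
  have e4 : ∀ i ∈ l₂, ∀ y, ff y i = f y i :=
    fun i hi => hff i (List.mem_append_right _ hi)
  rw [List.foldl_append, List.foldl_append, List.foldl_append, List.foldl_cons,
    List.foldl_cons, foldl_congr l₁ e1 x, foldl_congr l₁ e3 x,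
    foldl_congr l₂ e2, foldl_congr l₂ e4, ← foldl_add hadd, hj]

lemma exists_sort_split {A : Finset ℕ} {j : ℕ} (hj : j ∉ A) :
    ∃ l₁ l₂ : List ℕ, (insert j A).sort (· ≤ ·) = l₁ ++ j :: l₂ ∧
      A.sort (· ≤ ·) = l₁ ++ l₂ := by
  have hmem : j ∈ (insert j A).sort (· ≤ ·) := by simp [Finset.mem_sort]
  obtain ⟨l₁, l₂, hj₁, heq, herase⟩ := List.exists_erase_eq hmem
  refine ⟨l₁, l₂, heq, ?_⟩
  rw [← herase]
  have hperm : (A.sort (· ≤ ·)).Perm (((insert j A).sort (· ≤ ·)).erase j) := by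
    have p1 := Finset.sort_perm_toList (insert j A) (· ≤ ·)
    have p2 := Finset.toList_insert hj
    have p4 := (p1.trans p2).erase j
    rw [List.erase_cons_head] at p4
    exact (Finset.sort_perm_toList A (· ≤ ·)).trans p4.symm
  exact List.Perm.eq_of_pairwise' (Finset.pairwise_sort _ _)
    (List.Pairwise.sublist List.erase_sublist
      (Finset.pairwise_sort (insert j A) (· ≤ ·))) hperm

variable {ι H : Type*} [NormedAddCommGroup H] [InnerProductSpace ℂ H] [CompleteSpace H]

lemma Hs_compl (u : HilbertBasis ι ℂ H) (S : Set ι) : Hs u Sᶜ = (Hs u S)ᗮ := by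
  apply le_antisymm
  · apply Submodule.topologicalClosure_minimal
    · rw [Submodule.span_le]
      rintro x ⟨i, hi, rfl⟩
      rw [SetLike.mem_coe, Submodule.mem_orthogonal]
      intro y hy
      have hle : Hs u S ≤ (Submodule.span ℂ {u i})ᗮ := by
        apply Submodule.topologicalClosure_minimal
        · rw [Submodule.span_le]
          rintro z ⟨k, hk, rfl⟩
          rw [SetLike.mem_coe, Submodule.mem_orthogonal_singleton_iff_inner_right]
          exact u.orthonormal.2 (fun h => hi (h ▸ hk))
        · exact Submodule.isClosed_orthogonal _
      have hz := hle hy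
      rw [Submodule.mem_orthogonal_singleton_iff_inner_right] at hz
      exact inner_eq_zero_symm.mp hz
    · exact Submodule.isClosed_orthogonal _
  · intro x hx
    have hsum := u.hasSum_repr x
    refine (Submodule.isClosed_topologicalClosure _).mem_of_tendsto hsum ?_
    filter_upwards with s
    apply Submodule.sum_mem
    intro i _
    by_cases hi : i ∈ S
    · have hui : (u i : H) ∈ Hs u S :=
        (Submodule.le_topologicalClosure _) (Submodule.subset_span ⟨i, hi, rfl⟩)
      have hz : u.repr x i = 0 := by
        rw [u.repr_apply_apply]
        exact (Submodule.mem_orthogonal _ _).mp hx _ hui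
      simp [hz]
    · exact Submodule.smul_mem _ _ ((Submodule.le_topologicalClosure _)
        (Submodule.subset_span ⟨i, hi, rfl⟩))

omit [CompleteSpace H] in
lemma proj_congr {K L : Submodule ℂ H} [K.HasOrthogonalProjection] [L.HasOrthogonalProjection]
    (h : K = L) (x : H) : (Submodule.orthogonalProjectionOnto K x : H) =
      Submodule.orthogonalProjectionOnto L x := by
  subst h; rfl

lemma P_add_P_compl (u : HilbertBasis ι ℂ H) (S : Set ι) (x : H) :
    P u S x + P u Sᶜ x = x := by
  have h := Submodule.starProjection_add_starProjection_orthogonal (K := Hs u S) x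
  rw [Submodule.starProjection_apply, Submodule.starProjection_apply] at h
  rw [P, P]
  simp only [ContinuousLinearMap.comp_apply, Submodule.subtypeL_apply]
  rw [proj_congr (Hs_compl u S)]
  exact h

lemma Pj_add_Pj_compl (u : HilbertBasis ι ℂ H) (lam : ℕ → ι → ℝ) (j : ℕ) (S : Set ℝ)
    (x : H) : Pj u lam j S x + Pj u lam j Sᶜ x = x := by
  have hset : {i | lam j i ∈ Sᶜ} = {i | lam j i ∈ S}ᶜ := rfl
  rw [Pj, Pj, hset]
  exact P_add_P_compl u _ x

/-- One step of the projection fold. -/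
def step (u : HilbertBasis ι ℂ H) (lam : ℕ → ι → ℝ) (up : ℕ → Set ℝ) (w : ℕ → Bool)
    (x : H) (j : ℕ) : H :=
  Pj u lam j (if w j then up j else (up j)ᶜ) x

variable (u : HilbertBasis ι ℂ H) (lam : ℕ → ι → ℝ) (up : ℕ → Set ℝ)

lemma step_congr {w w' : ℕ → Bool} {j : ℕ} (h : w j = w' j) (x : H) :
    step u lam up w x j = step u lam up w' x j := by
  unfold step
  rw [h]

lemma step_add (w : ℕ → Bool) (j : ℕ) (x y : H) :
    step u lam up w (x + y) j = step u lam up w x j + step u lam up w y j :=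
  map_add _ _ _

lemma step_update_sum (w : ℕ → Bool) (j : ℕ) (y : H) :
    step u lam up (Function.update w j true) y j
      + step u lam up (Function.update w j false) y j = y := by
  unfold step
  rw [Function.update_self, Function.update_self, if_pos rfl, if_neg (by simp)]
  exact Pj_add_Pj_compl u lam j (up j) y

/-- Total extension of a valuation on `A` by `false`. -/
def extv (A : Finset ℕ) (v : {n // n ∈ A} → Bool) : ℕ → Bool :=
  fun n => if h : n ∈ A then v ⟨n, h⟩ else false

lemma Sat_iff (A : Finset ℕ) (v : {n // n ∈ A} → Bool) (α : PropForm) :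
    Sat A v α ↔ PropForm.eval (extv A v) α = true := Iff.rfl

/-- Generalized probability: sum over valuations on a finite set `A`. -/
def Q (ψ : H) (A : Finset ℕ) (α : PropForm) : ℝ :=
  ∑ v : {n // n ∈ A} → Bool,
    if Sat A v α then
      (⟪ψ, (A.sort (· ≤ ·)).foldl (step u lam up (extv A v)) ψ⟫_ℂ).re
    else 0

def valEquiv (A : Finset ℕ) (j : ℕ) (hj : j ∉ A) :
    ({n // n ∈ insert j A} → Bool) ≃ ({n // n ∈ A} → Bool) × Bool where
  toFun v' := (fun n => v' ⟨n.1, Finset.mem_insert_of_mem n.2⟩,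
    v' ⟨j, Finset.mem_insert_self j A⟩)
  invFun p := fun n => if h : n.1 ∈ A then p.1 ⟨n.1, h⟩ else p.2
  left_inv v' := by
    funext n
    rcases n with ⟨n, hn⟩
    by_cases h : n ∈ A
    · simp [h]
    · have hnj : n = j := by
        rcases Finset.mem_insert.mp hn with h' | h'
        · exact h'
        · exact absurd h' h
      subst hnj
      simp [h]
  right_inv p := by
    rcases p with ⟨v, b⟩
    refine Prod.ext ?_ ?_
    · funext n
      simp [n.2]
    · simp [hj]

lemma extv_insert (A : Finset ℕ) (j : ℕ) (hj : j ∉ A) (v : {n // n ∈ A} → Bool) (b : Bool) :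
    extv (insert j A) ((valEquiv A j hj).symm (v, b)) = Function.update (extv A v) j b := by
  funext n
  by_cases hn : n = j
  · subst hn
    simp [extv, valEquiv, Function.update_self, hj]
  · by_cases hA : n ∈ A
    · simp [extv, valEquiv, Function.update_of_ne hn, Finset.mem_insert, hA, hn]
    · simp [extv, valEquiv, Function.update_of_ne hn, Finset.mem_insert, hA, hn]

lemma Q_insert (ψ : H) (A : Finset ℕ) (α : PropForm) (hsub : α.symbols ⊆ A) (j : ℕ)
    (hj : j ∉ A) : Q u lam up ψ (insert j A) α = Q u lam up ψ A α := by
  obtain ⟨l₁, l₂, hsortI, hsortA⟩ := exists_sort_split hj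
  have hnodup := Finset.sort_nodup (insert j A) (· ≤ ·)
  rw [hsortI] at hnodup
  obtain ⟨-, h2, hd12⟩ := List.nodup_append.mp hnodup
  have hj₂ : j ∉ l₂ := (List.nodup_cons.mp h2).1
  have hj₁ : j ∉ l₁ := fun h => hd12 j h j List.mem_cons_self rfl
  have hjl : j ∉ l₁ ++ l₂ := by
    intro hmem
    rcases List.mem_append.mp hmem with hm | hm
    · exact hj₁ hm
    · exact hj₂ hm
  rw [Q, ← Equiv.sum_comp (valEquiv A j hj).symm, Fintype.sum_prod_type, Q]
  apply Finset.sum_congr rfl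
  intro v _
  have hSat : ∀ b : Bool,
      (Sat (insert j A) ((valEquiv A j hj).symm (v, b)) α ↔ Sat A v α) := by
    intro b
    rw [Sat_iff, Sat_iff, extv_insert A j hj v b]
    have heq : PropForm.eval (Function.update (extv A v) j b) α
        = PropForm.eval (extv A v) α := by
      apply eval_congr
      intro n hn
      exact Function.update_of_ne (fun (he : n = j) => hj (he ▸ hsub hn)) _ _
    rw [heq]
  by_cases hs : Sat A v α
  · simp only [hSat, hs, if_true]
    rw [Fintype.sum_bool, extv_insert A j hj v true, extv_insert A j hj v false,
      hsortI, hsortA]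
    rw [← foldl_split_sum (step u lam up (extv A v))
        (step u lam up (Function.update (extv A v) j true))
        (step u lam up (Function.update (extv A v) j false)) j l₁ l₂
        (fun i hi y => step_congr u lam up (Function.update_of_ne
          (fun (he : i = j) => hjl (he ▸ hi)) _ _) y)
        (fun i hi y => step_congr u lam up (Function.update_of_ne
          (fun (he : i = j) => hjl (he ▸ hi)) _ _) y)
        (step_update_sum u lam up (extv A v) j)
        (step_add u lam up (extv A v)) ψ]
    rw [inner_add_right, Complex.add_re]
  · simp only [hSat, hs, if_false]
    rw [Finset.sum_const_zero]

lemma Q_union (ψ : H) (A B : Finset ℕ) (α : PropForm) (hsub : α.symbols ⊆ A) :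
    Q u lam up ψ (A ∪ B) α = Q u lam up ψ A α := by
  induction B using Finset.induction with
  | empty => rw [Finset.union_empty]
  | @insert a s _ ih =>
    by_cases has : a ∈ A ∪ s
    · rw [Finset.union_insert, Finset.insert_eq_self.mpr has, ih]
    · rw [Finset.union_insert,
        Q_insert u lam up ψ (A ∪ s) α (hsub.trans Finset.subset_union_left) a has, ih]

lemma Prob_eq_Q (ψ : H) (α : PropForm) :
    Prob u lam up ψ α = Q u lam up ψ α.symbols α := by
  rw [Prob, Q, Finset.sum_filter]
  apply Finset.sum_congr rfl
  intro v _
  have hfd : (α.symbols.sort (· ≤ ·)).foldl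
      (fun x j => if h : j ∈ α.symbols then
          Pj u lam j (if v ⟨j, h⟩ then up j else (up j)ᶜ) x
        else x) ψ = (α.symbols.sort (· ≤ ·)).foldl (step u lam up (extv α.symbols v)) ψ := by
    apply foldl_congr
    intro j hj y
    have hjA : j ∈ α.symbols := (Finset.mem_sort (α := ℕ) (· ≤ ·)).mp hj
    simp only [step, extv, dif_pos hjA]
  rw [hfd]

end Stmt8Aux

open Stmt8Aux in
/-- If no valuation on `B_α ∪ B_β` satisfies both `α` and `β` (`¬(β ∧ α)` is a tautology),
then `Prob(β ∨ α) = Prob(β) + Prob(α)`, where `β ∨ α` abbreviates `(¬β) → α`. -/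
theorem stmt8 (u : HilbertBasis ι ℂ H) (ψ : H) (hψ : ‖ψ‖ = 1)
    (O : ℕ → H →L[ℂ] H) (lam : ℕ → ι → ℝ)
    (heig : ∀ j i, O j (u i) = (lam j i : ℂ) • u i) (up : ℕ → Set ℝ) (α β : PropForm)
    (hdisj : ∀ w : {n // n ∈ α.symbols ∪ β.symbols} → Bool,
        ¬ (Sat (α.symbols ∪ β.symbols) w β ∧ Sat (α.symbols ∪ β.symbols) w α)) :
    Prob u lam up ψ (PropForm.imp (PropForm.neg β) α) =
      Prob u lam up ψ β + Prob u lam up ψ α := by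
  classical
  set γ : PropForm := PropForm.imp (PropForm.neg β) α with hγ
  have hsymγ : γ.symbols = β.symbols ∪ α.symbols := rfl
  have h1 : Prob u lam up ψ γ = Q u lam up ψ (α.symbols ∪ β.symbols) γ := by
    rw [Prob_eq_Q, hsymγ, Finset.union_comm]
  have h2 : Prob u lam up ψ β = Q u lam up ψ (α.symbols ∪ β.symbols) β := by
    rw [Prob_eq_Q, ← Q_union u lam up ψ β.symbols α.symbols β (le_refl _), Finset.union_comm]
  have h3 : Prob u lam up ψ α = Q u lam up ψ (α.symbols ∪ β.symbols) α := by
    rw [Prob_eq_Q, ← Q_union u lam up ψ α.symbols β.symbols α (le_refl _)]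
  rw [h1, h2, h3, Q, Q, Q, ← Finset.sum_add_distrib]
  apply Finset.sum_congr rfl
  intro v _
  have hor : Sat (α.symbols ∪ β.symbols) v γ ↔
      (Sat (α.symbols ∪ β.symbols) v β ∨ Sat (α.symbols ∪ β.symbols) v α) := by
    simp [Sat, hγ, PropForm.eval]
  by_cases hb : Sat (α.symbols ∪ β.symbols) v β
  · by_cases ha : Sat (α.symbols ∪ β.symbols) v α
    · exact absurd ⟨hb, ha⟩ (hdisj v)
    · rw [if_pos (hor.mpr (Or.inl hb)), if_pos hb, if_neg ha, add_zero]
  · by_cases ha : Sat (α.symbols ∪ β.symbols) v α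
    · rw [if_pos (hor.mpr (Or.inr ha)), if_neg hb, if_pos ha, zero_add]
    · rw [if_neg (fun h => (hor.mp h).elim hb ha), if_neg hb, if_neg ha, add_zero]


end
end

section
/- Let α be a classical propositional formula and let v and v' be valuations on B_α that agree on eB_α (i.e. v(B_j) = v'(B_j) for every B_j ∈ eB_α). Then v ⊨ α if and only if v' ⊨ α. (The truth values of the non-essential propositional symbols are irrelevant for determining the truth value of α.) -/
/-- The propositional symbol `B_j` is essential for `α`: `B_j` occurs in `α` and there is
a valuation `v` such that `v[B_j ↦ 0] ⊨ α` iff `v[B_j ↦ 1] ⊭ α`. -/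
def Essential (α : PropForm) (j : ℕ) : Prop :=
  j ∈ α.symbols ∧ ∃ v : ℕ → Bool,
    (PropForm.eval (Function.update v j false) α = true ↔
      ¬ PropForm.eval (Function.update v j true) α = true)

/-- `eB α` is the set of propositional symbols essential for `α`. -/
def eB (α : PropForm) : Set ℕ :=
  {j | Essential α j}

lemma eval_congr (α : PropForm) (v v' : ℕ → Bool)
    (h : ∀ j ∈ α.symbols, v j = v' j) : α.eval v = α.eval v' := by
  induction α with
  | verum => rfl
  | var n => exact h n (by simp [PropForm.symbols])
  | neg a ih => simp only [PropForm.eval]; rw [ih h]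
  | imp a b iha ihb =>
      simp only [PropForm.eval]
      rw [iha fun j hj => h j (by simp [PropForm.symbols, hj]),
        ihb fun j hj => h j (by simp [PropForm.symbols, hj])]

lemma eval_update_of_not_essential (α : PropForm) (j : ℕ)
    (hne : ¬ Essential α j) (v : ℕ → Bool) (b : Bool) :
    α.eval (Function.update v j b) = α.eval v := by
  by_cases hj : j ∈ α.symbols
  · have key : ∀ w : ℕ → Bool,
        α.eval (Function.update w j false) = α.eval (Function.update w j true) := by
      intro w
      by_contra hne'
      exact hne ⟨hj, w, by
        rcases Bool.eq_false_or_eq_true (α.eval (Function.update w j false)) with h0 | h0 <;>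
        rcases Bool.eq_false_or_eq_true (α.eval (Function.update w j true)) with h1 | h1 <;>
          simp_all⟩
    have hv : α.eval v = α.eval (Function.update v j (v j)) := by
      rw [Function.update_eq_self]
    cases b <;> cases hvj : v j <;> rw [hv, hvj] <;> simp [key v]
  · exact eval_congr _ _ _ fun k hk =>
      Function.update_of_ne (by rintro rfl; exact hj hk) _ _

lemma stmt15_aux (α : PropForm) (s : Finset ℕ) : ∀ v v' : ℕ → Bool,
    (∀ j, Essential α j → v j = v' j) →
    (∀ j ∈ α.symbols, j ∉ s → v j = v' j) → α.eval v = α.eval v' := by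
  induction s using Finset.induction_on with
  | empty => exact fun v v' _ h => eval_congr _ _ _ fun j hj => h j hj (by simp)
  | @insert a t ha ih =>
      intro v v' hagree hout
      set v'' : ℕ → Bool := Function.update v a (v' a) with hv''
      have h1 : α.eval v = α.eval v'' := by
        by_cases hcase : Essential α a
        · rw [hv'', ← hagree a hcase, Function.update_eq_self]
        · exact (eval_update_of_not_essential α a hcase v (v' a)).symm
      rw [h1]
      apply ih
      · intro j hj
        by_cases hja : j = a
        · subst hja; simp [hv'']
        · rw [hv'', Function.update_of_ne hja]; exact hagree j hj
      · intro j hjs hjt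
        by_cases hja : j = a
        · subst hja; simp [hv'']
        · rw [hv'', Function.update_of_ne hja]
          exact hout j hjs (by simp [hja, hjt])

/-- If two valuations agree on every symbol essential for `α`, then they give `α` the
same truth value: the non-essential symbols are irrelevant. -/
theorem stmt15 (α : PropForm) (v v' : ℕ → Bool)
    (hagree : ∀ j, Essential α j → v j = v' j) :
    (α.eval v = true ↔ α.eval v' = true) := by
  rw [stmt15_aux α α.symbols v v' hagree (fun j hj hj' => absurd hj hj')]
end

section
/- Let K' and K'' be closed subspaces of 𝓗. The following are equivalent: (a) (K' ⊓ K'') ⊔ ((K')ᗮ ⊓ K'') ⊔ (K' ⊓ (K'')ᗮ) ⊔ ((K')ᗮ ⊓ (K'')ᗮ) = 𝓗; (b) (K' ⊓ K'') ⊔ ((K')ᗮ ⊓ K'') = K''; (c) (K' ⊔ (K'')ᗮ) ⊓ K'' = K' ⊓ K''. -/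
variable {𝓗 : Type*} [NormedAddCommGroup 𝓗] [InnerProductSpace ℂ 𝓗] [CompleteSpace 𝓗]

local notation "⟪" x ", " y "⟫" => @inner ℂ _ _ x y

private lemma aux_sup2 (W X : Submodule ℂ 𝓗) : (W ⊔ X)ᗮ = Wᗮ ⊓ Xᗮ :=
  (Submodule.inf_orthogonal W X).symm

private lemma aux_sup4 (W X Y Z : Submodule ℂ 𝓗) :
    (W ⊔ X ⊔ Y ⊔ Z)ᗮ = Wᗮ ⊓ Xᗮ ⊓ Yᗮ ⊓ Zᗮ := by
  rw [aux_sup2, aux_sup2, aux_sup2]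

/-- For a subspace `S` of a closed subspace `K`, the closure of `S` is `K` iff
`Sᗮ ⊓ K = ⊥`. -/
private lemma aux_closure_eq_iff {K S : Submodule ℂ 𝓗} (hK : IsClosed (K : Set 𝓗))
    (hSK : S ≤ K) : S.topologicalClosure = K ↔ Sᗮ ⊓ K = ⊥ := by
  constructor
  · intro h
    rw [eq_bot_iff]
    rintro x ⟨hx1, hx2⟩
    have hx3 : x ∈ Sᗮᗮ := by
      rw [Submodule.orthogonal_orthogonal_eq_closure, h]; exact hx2
    have h0 : ⟪x, x⟫ = 0 := (Submodule.mem_orthogonal _ x).1 hx3 x hx1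
    simpa using inner_self_eq_zero.mp h0
  · intro h
    refine le_antisymm (S.topologicalClosure_minimal hSK hK) ?_
    intro x hx
    haveI : CompleteSpace S.topologicalClosure :=
      S.isClosed_topologicalClosure.completeSpace_coe
    obtain ⟨y, hy, z, hz, hxyz⟩ := S.topologicalClosure.exists_add_mem_mem_orthogonal x
    haveI : CompleteSpace Sᗮ := S.isClosed_orthogonal.completeSpace_coe
    haveI : Submodule.HasOrthogonalProjection Sᗮ := Submodule.HasOrthogonalProjection.ofCompleteSpace _
    have horth : S.topologicalClosureᗮ = Sᗮ := by
      rw [← Submodule.orthogonal_orthogonal_eq_closure, Submodule.orthogonal_orthogonal]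
    have hz' : z ∈ Sᗮ := horth ▸ hz
    have hyK : y ∈ K := S.topologicalClosure_minimal hSK hK hy
    have hzK : z ∈ K := by
      have : z = x - y := by simp [hxyz]
      exact this ▸ K.sub_mem hx hyK
    have : z ∈ (⊥ : Submodule ℂ 𝓗) := h ▸ Submodule.mem_inf.mpr ⟨hz', hzK⟩
    have hz0 : z = 0 := by simpa using this
    have : x = y := by rw [hxyz, hz0, add_zero]
    exact this ▸ hy

/-- If `Yᗮ ⊓ Z = X` then `Xᗮ ⊓ Yᗮ ⊓ Z = ⊥`. -/
private lemma aux_cb {X Y Z : Submodule ℂ 𝓗} (h : Yᗮ ⊓ Z = X) :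
    Xᗮ ⊓ Yᗮ ⊓ Z = ⊥ := by
  rw [inf_assoc, h, inf_comm, Submodule.inf_orthogonal_eq_bot]

/-- The commuting property passes from `K''` to `K''ᗮ`. -/
private lemma aux_swap (K' K'' : Submodule ℂ 𝓗) (h' : IsClosed (K' : Set 𝓗))
    (h'' : IsClosed (K'' : Set 𝓗))
    (hc : (K'ᗮ ⊓ K'')ᗮ ⊓ K'' = K' ⊓ K'') :
    (K'ᗮ ⊓ K''ᗮ)ᗮ ⊓ K''ᗮ = K' ⊓ K''ᗮ := by
  haveI : CompleteSpace K' := h'.completeSpace_coe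
  have hB : IsClosed ((K'ᗮ ⊓ K'' : Submodule ℂ 𝓗) : Set 𝓗) := by
    rw [Submodule.coe_inf]; exact (Submodule.isClosed_orthogonal K').inter h''
  haveI : CompleteSpace (K'ᗮ ⊓ K'' : Submodule ℂ 𝓗) := hB.completeSpace_coe
  apply le_antisymm
  · rintro x ⟨hxD, hxKo⟩
    obtain ⟨u, hu, v, hv, hxuv⟩ := K'.exists_add_mem_mem_orthogonal x
    have hux : u = x - v := by simp [hxuv]
    have hvx : v = x - u := by simp [hxuv]
    have huK'' : u ∈ K''ᗮ := by
      rw [Submodule.mem_orthogonal]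
      intro w hw
      obtain ⟨b, hb, r, hr, hwbr⟩ := (K'ᗮ ⊓ K'').exists_add_mem_mem_orthogonal w
      have hrK'' : r ∈ K'' := by
        have : r = w - b := by simp [hwbr]
        exact this ▸ K''.sub_mem hw hb.2
      have hrA : r ∈ K' ⊓ K'' := by rw [← hc]; exact ⟨hr, hrK''⟩
      have hbu : ⟪b, u⟫ = 0 := (Submodule.mem_orthogonal' _ b).1 hb.1 u hu
      have hrx : ⟪r, x⟫ = 0 := (Submodule.mem_orthogonal _ x).1 hxKo r hrA.2
      have hrv : ⟪r, v⟫ = 0 := (Submodule.mem_orthogonal _ v).1 hv r hrA.1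
      have hru : ⟪r, u⟫ = 0 := by rw [hux, inner_sub_right, hrx, hrv, sub_zero]
      rw [hwbr, inner_add_left, hbu, hru, add_zero]
    have hvD : v ∈ K'ᗮ ⊓ K''ᗮ := ⟨hv, hvx ▸ K''ᗮ.sub_mem hxKo huK''⟩
    have hvx0 : ⟪v, x⟫ = 0 := (Submodule.mem_orthogonal _ x).1 hxD v hvD
    have hvu : ⟪v, u⟫ = 0 := (Submodule.mem_orthogonal' _ v).1 hv u hu
    have hv0 : v = 0 := by
      have hvv : ⟪v, v⟫ = ⟪v, x⟫ - ⟪v, u⟫ := by rw [← inner_sub_right, ← hvx]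
      have : ⟪v, v⟫ = 0 := by rw [hvv, hvx0, hvu, sub_zero]
      exact inner_self_eq_zero.mp this
    have hxK' : x ∈ K' := by rw [hxuv, hv0, add_zero]; exact hu
    exact ⟨hxK', hxKo⟩
  · rintro x ⟨hx1, hx2⟩
    refine ⟨(Submodule.mem_orthogonal _ x).2 fun d hd => ?_, hx2⟩
    exact (Submodule.mem_orthogonal' _ d).1 hd.1 x hx1

/-- For closed subspaces `K'` and `K''` of a complex Hilbert space, with `⊔` denoting the
topological closure of the sum, the following are equivalent:
(a) `(K' ⊓ K'') ⊔ ((K')ᗮ ⊓ K'') ⊔ (K' ⊓ (K'')ᗮ) ⊔ ((K')ᗮ ⊓ (K'')ᗮ) = 𝓗`;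
(b) `(K' ⊓ K'') ⊔ ((K')ᗮ ⊓ K'') = K''`;
(c) `(K' ⊔ (K'')ᗮ) ⊓ K'' = K' ⊓ K''`. -/
theorem stmt17 (K' K'' : Submodule ℂ 𝓗)
    (h' : IsClosed (K' : Set 𝓗)) (h'' : IsClosed (K'' : Set 𝓗)) :
    (((K' ⊓ K'') ⊔ (K'ᗮ ⊓ K'') ⊔ (K' ⊓ K''ᗮ) ⊔ (K'ᗮ ⊓ K''ᗮ)).topologicalClosure = ⊤ ↔
      ((K' ⊓ K'') ⊔ (K'ᗮ ⊓ K'')).topologicalClosure = K'') ∧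
    (((K' ⊓ K'') ⊔ (K'ᗮ ⊓ K'')).topologicalClosure = K'' ↔
      (K' ⊔ K''ᗮ).topologicalClosure ⊓ K'' = K' ⊓ K'') := by
  haveI : CompleteSpace K' := h'.completeSpace_coe
  haveI : CompleteSpace K'' := h''.completeSpace_coe
  set A := K' ⊓ K'' with hA
  set B := K'ᗮ ⊓ K'' with hB
  set C := K' ⊓ K''ᗮ with hC
  set D := K'ᗮ ⊓ K''ᗮ with hD
  have hAclosed : IsClosed ((A : Submodule ℂ 𝓗) : Set 𝓗) := by
    rw [hA, Submodule.coe_inf]; exact h'.inter h''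
  haveI : CompleteSpace A := hAclosed.completeSpace_coe
  have hAB : A ≤ Bᗮ := by
    rintro a ⟨ha1, ha2⟩
    rw [Submodule.mem_orthogonal]
    rintro b ⟨hb1, hb2⟩
    exact (Submodule.mem_orthogonal' _ b).1 hb1 a ha1
  -- translation of (a)
  have ha_iff : ((A ⊔ B ⊔ C ⊔ D).topologicalClosure = ⊤) ↔
      (Aᗮ ⊓ Bᗮ ⊓ Cᗮ ⊓ Dᗮ = ⊥) := by
    rw [Submodule.topologicalClosure_eq_top_iff, aux_sup4]
  -- translation of (b)
  have hABle : A ⊔ B ≤ K'' := sup_le inf_le_right inf_le_right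
  have hb_iff : ((A ⊔ B).topologicalClosure = K'') ↔ (Aᗮ ⊓ Bᗮ ⊓ K'' = ⊥) := by
    rw [aux_closure_eq_iff h'' hABle, aux_sup2]
  -- translation of (c)
  have hc_iff : ((K' ⊔ K''ᗮ).topologicalClosure ⊓ K'' = A) ↔ (Bᗮ ⊓ K'' = A) := by
    rw [← Submodule.orthogonal_orthogonal_eq_closure, aux_sup2,
      Submodule.orthogonal_orthogonal, ← hB]
  -- implications
  have hcb : (Bᗮ ⊓ K'' = A) → (Aᗮ ⊓ Bᗮ ⊓ K'' = ⊥) := aux_cb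
  have hbc : (Aᗮ ⊓ Bᗮ ⊓ K'' = ⊥) → (Bᗮ ⊓ K'' = A) := by
    intro hb
    apply le_antisymm
    · rintro x ⟨hxB, hxK⟩
      obtain ⟨y, hy, z, hz, hxyz⟩ := A.exists_add_mem_mem_orthogonal x
      have hzx : z = x - y := by simp [hxyz]
      have hzK : z ∈ K'' := hzx ▸ K''.sub_mem hxK hy.2
      have hzB : z ∈ Bᗮ := hzx ▸ Bᗮ.sub_mem hxB (hAB hy)
      have : z ∈ (⊥ : Submodule ℂ 𝓗) := hb ▸ (⟨⟨hz, hzB⟩, hzK⟩ :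
        z ∈ Aᗮ ⊓ Bᗮ ⊓ K'')
      have hz0 : z = 0 := by simpa using this
      have : x = y := by rw [hxyz, hz0, add_zero]
      exact this ▸ hy
    · exact le_inf hAB inf_le_right
  have hab : (Aᗮ ⊓ Bᗮ ⊓ Cᗮ ⊓ Dᗮ = ⊥) → (Aᗮ ⊓ Bᗮ ⊓ K'' = ⊥) := by
    intro ha
    rw [eq_bot_iff]
    rintro x ⟨⟨hxA, hxB⟩, hxK⟩
    have hxC : x ∈ Cᗮ := by
      rw [Submodule.mem_orthogonal]
      rintro c ⟨hc1, hc2⟩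
      exact (Submodule.mem_orthogonal' _ c).1 hc2 x hxK
    have hxD : x ∈ Dᗮ := by
      rw [Submodule.mem_orthogonal]
      rintro d ⟨hd1, hd2⟩
      exact (Submodule.mem_orthogonal' _ d).1 hd2 x hxK
    have : x ∈ (⊥ : Submodule ℂ 𝓗) := ha ▸ (⟨⟨⟨hxA, hxB⟩, hxC⟩, hxD⟩ :
      x ∈ Aᗮ ⊓ Bᗮ ⊓ Cᗮ ⊓ Dᗮ)
    simpa using this
  have hba : (Aᗮ ⊓ Bᗮ ⊓ K'' = ⊥) → (Aᗮ ⊓ Bᗮ ⊓ Cᗮ ⊓ Dᗮ = ⊥) := by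
    intro hb
    have hc := hbc hb
    have hswap : Dᗮ ⊓ K''ᗮ = C := aux_swap K' K'' h' h'' hc
    have hb' : Cᗮ ⊓ Dᗮ ⊓ K''ᗮ = ⊥ := aux_cb hswap
    rw [eq_bot_iff]
    rintro x ⟨⟨⟨hxA, hxB⟩, hxC⟩, hxD⟩
    obtain ⟨y, hy, z, hz, hxyz⟩ := K''.exists_add_mem_mem_orthogonal x
    have hyx : y = x - z := by simp [hxyz]
    have hyA : y ∈ Aᗮ := by
      rw [Submodule.mem_orthogonal]
      intro a ha
      have h1 : ⟪a, x⟫ = 0 := (Submodule.mem_orthogonal _ x).1 hxA a ha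
      have h2 : ⟪a, z⟫ = 0 := (Submodule.mem_orthogonal _ z).1 hz a ha.2
      rw [hyx, inner_sub_right, h1, h2, sub_zero]
    have hyB : y ∈ Bᗮ := by
      rw [Submodule.mem_orthogonal]
      intro b hb''
      have h1 : ⟪b, x⟫ = 0 := (Submodule.mem_orthogonal _ x).1 hxB b hb''
      have h2 : ⟪b, z⟫ = 0 := (Submodule.mem_orthogonal _ z).1 hz b hb''.2
      rw [hyx, inner_sub_right, h1, h2, sub_zero]
    have : y ∈ (⊥ : Submodule ℂ 𝓗) := hb ▸ (⟨⟨hyA, hyB⟩, hy⟩ : y ∈ Aᗮ ⊓ Bᗮ ⊓ K'')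
    have hy0 : y = 0 := by simpa using this
    have hxz : x = z := by rw [hxyz, hy0, zero_add]
    have : x ∈ (⊥ : Submodule ℂ 𝓗) := hb' ▸ (⟨⟨hxC, hxD⟩, hxz ▸ hz⟩ :
      x ∈ Cᗮ ⊓ Dᗮ ⊓ K''ᗮ)
    simpa using this
  constructor
  · rw [ha_iff, hb_iff]
    exact ⟨hab, hba⟩
  · rw [hb_iff, hc_iff]
    exact ⟨fun h => hbc h, fun h => hcb h⟩
end
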